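/- arXiv:math/0602579 — 2 statements merged into one kernel-verified Lean document; each statement's English description precedes it below -/
import Mathlib

section
/- Lemma 1 (every active triangle has at least one inversion): Let v_i, v_j, v_r ∈ ℝ³ be three distinct points and a_i, a_j, a_r ∈ ℝ³ velocity vectors such that for each of the three edges (pairs) {i,j}, {i,r}, {j,r}, the two inner products of the endpoint velocity vectors with the edge vector have the same sign; e.g. for the edge {i,j}: either ⟨v_i − v_j, a_i⟩ = ⟨v_i − v_j, a_j⟩ = 0, or both inner products are negative, or both are positive. Orient each edge by this common sign (the edge {i,j} is oriented v_i → v_j if both inner products are negative, oriented v_j → v_i if both are positive, and unoriented if both are zero). For each vertex of the triangle, define the doubled inversion count between its two incident edges as: 2 if one edge is oriented into the vertex and the other out of it; 0 if both are oriented into the vertex or both out of it; 1 if exactly one of the two edges is unoriented; 2 if both edges are unoriented and the vertex is live (its velocity vector is nonzero); 0 if both edges are unoriented and the vertex is dead (its velocity vector is zero). If the triangle is active, i.e., at least one of a_i, a_j, a_r is nonzero, then the sum of the doubled inversion counts over the three vertices is at least 2 (i.e., the triangle has at least one inversion). -/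
open scoped RealInnerProductSpace Classical

/-- Two real numbers "have the same sign": both zero, both negative, or both positive. -/
def SameSign (x y : ℝ) : Prop :=
  (x = 0 ∧ y = 0) ∨ (x < 0 ∧ y < 0) ∨ (0 < x ∧ 0 < y)

/-- The sign of a real number as an integer in `{-1, 0, 1}`. -/
noncomputable def isign (x : ℝ) : ℤ :=
  if x < 0 then -1 else if x = 0 then 0 else 1

/-- The doubled inversion count between two edges meeting at a common vertex.
`x, y ∈ {-1, 0, 1}` are the signs of the inner products of the vertex's velocity
vector with the two outgoing edge vectors (so `-1` means the edge is oriented out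
of the vertex, `1` into the vertex, `0` unoriented), and `live` records whether the
vertex is live (nonzero velocity):
* `2` (one inversion) if one edge is oriented into the vertex and the other out of it;
* `0` (zero inversions) if both are oriented into the vertex or both out of it;
* `1` (a half-inversion) if exactly one of the two edges is unoriented;
* `2` (one inversion) if both are unoriented and the vertex is live;
* `0` (zero inversions) if both are unoriented and the vertex is dead. -/
noncomputable def doubledInversions (live : Prop) (x y : ℤ) : ℤ :=
  if x = 0 ∧ y = 0 then (if live then 2 else 0)
  else if x = 0 ∨ y = 0 then 1
  else if x = y then 0 else 2


lemma isign_mem (x : ℝ) : isign x = -1 ∨ isign x = 0 ∨ isign x = 1 := by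
  unfold isign; split_ifs <;> simp

lemma isign_neg (x : ℝ) : isign (-x) = -isign x := by
  unfold isign
  rcases lt_trichotomy x 0 with h | rfl | h
  · rw [if_neg (by linarith), if_neg (by simpa using h.ne), if_pos h]; norm_num
  · norm_num
  · rw [if_pos (by linarith), if_neg (not_lt.2 h.le), if_neg h.ne']

lemma SameSign.isign_eq {x y : ℝ} (h : SameSign x y) : isign x = isign y := by
  unfold isign
  rcases h with ⟨h1, h2⟩ | ⟨h1, h2⟩ | ⟨h1, h2⟩
  · simp [h1, h2]
  · rw [if_pos h1, if_pos h2]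
  · rw [if_neg (not_lt.2 h1.le), if_neg h1.ne', if_neg (not_lt.2 h2.le), if_neg h2.ne']

lemma key (P Q R : Prop) (a b c : ℤ)
    (ha : a = -1 ∨ a = 0 ∨ a = 1) (hb : b = -1 ∨ b = 0 ∨ b = 1)
    (hc : c = -1 ∨ c = 0 ∨ c = 1) (hact : P ∨ Q ∨ R) :
    2 ≤ doubledInversions P a b + doubledInversions Q (-a) c
        + doubledInversions R (-b) (-c) := by
  rcases ha with rfl | rfl | rfl <;> rcases hb with rfl | rfl | rfl <;>
    rcases hc with rfl | rfl | rfl <;>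
    simp only [doubledInversions] <;> norm_num <;>
    (try (rcases hact with h | h | h <;> simp [h] <;> split_ifs <;> omega)) <;>
    split_ifs <;> omega

/-- **Lemma 1**: every active triangle has at least one inversion.  If the velocity
vectors have same-sign projections along each of the three edges of a triangle
`(vᵢ vⱼ vᵣ)` in `ℝ³`, and the triangle is active (at least one vertex is live), then
the total doubled inversion count over the three vertices is at least `2`. -/
theorem active_triangle_has_inversion
    (vi vj vr ai aj ar : EuclideanSpace ℝ (Fin 3))
    (hij' : vi ≠ vj) (hir' : vi ≠ vr) (hjr' : vj ≠ vr)
    (hij : SameSign ⟪vi - vj, ai⟫ ⟪vi - vj, aj⟫)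
    (hir : SameSign ⟪vi - vr, ai⟫ ⟪vi - vr, ar⟫)
    (hjr : SameSign ⟪vj - vr, aj⟫ ⟪vj - vr, ar⟫)
    (hactive : ai ≠ 0 ∨ aj ≠ 0 ∨ ar ≠ 0) :
    2 ≤ doubledInversions (ai ≠ 0)
          (isign ⟪vi - vj, ai⟫) (isign ⟪vi - vr, ai⟫)
      + doubledInversions (aj ≠ 0)
          (isign ⟪vj - vi, aj⟫) (isign ⟪vj - vr, aj⟫)
      + doubledInversions (ar ≠ 0)
          (isign ⟪vr - vi, ar⟫) (isign ⟪vr - vj, ar⟫) := by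
  have e1 : ⟪vj - vi, aj⟫ = -⟪vi - vj, aj⟫ := by
    rw [← inner_neg_left]; congr 1; abel
  have e2 : ⟪vr - vi, ar⟫ = -⟪vi - vr, ar⟫ := by
    rw [← inner_neg_left]; congr 1; abel
  have e3 : ⟪vr - vj, ar⟫ = -⟪vj - vr, ar⟫ := by
    rw [← inner_neg_left]; congr 1; abel
  rw [e1, e2, e3, isign_neg, isign_neg, isign_neg,
      ← hij.isign_eq, ← hir.isign_eq, ← hjr.isign_eq]
  exact key _ _ _ _ _ _ (isign_mem _) (isign_mem _) (isign_mem _) hactive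
end

section
/- Lemma 2 (at most two inversions around every live vertex): Let V ⊂ ℝ³ be a finite set whose affine span is all of ℝ³, with P = conv(V) and every point of V an extreme point of P. Let v ∈ V, let d ≥ 3, and let w : ZMod d → V be an injective cyclic enumeration of the neighbors of v, meaning: for each i, the segment [v, w(i)] is an edge of P (an extreme subset of P), and for each i the triangle conv{v, w(i), w(i+1)} is a 2-dimensional face (extreme subset) of P. Let a : V → ℝ³ satisfy, for each i, the sign condition on the edge [v, w(i)]: the inner products ⟨v − w(i), a(v)⟩ and ⟨v − w(i), a(w(i))⟩ are both zero, both negative, or both positive. Assume the vertex v is live: a(v) ≠ 0. For i ∈ ZMod d let s(i) ∈ {−1, 0, +1} be the sign of ⟨v − w(i), a(v)⟩ (so s(i) records whether the edge [v, w(i)] is oriented out of v, unoriented, or oriented into v). Define the doubled inversion count between the consecutive edges i and i+1 as: 2 if s(i)·s(i+1) = −1; 0 if s(i)·s(i+1) = +1; 1 if exactly one of s(i), s(i+1) is zero; 2 if s(i) = s(i+1) = 0. Then the sum over all i ∈ ZMod d of the doubled inversion counts is at most 4 (i.e., there are at most two inversions around v). -/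
open scoped RealInnerProductSpace Classical

/-- The doubled inversion count between two consecutive edges at a live vertex `v`,
where `x, y ∈ {-1, 0, 1}` are the signs of the inner products of the velocity `a v`
with the two edge vectors `v - w i`, `v - w (i+1)` (so `-1` means the edge is
oriented out of `v`, `1` into `v`, `0` unoriented):
* `2` (one inversion) if `x * y = -1` (one edge in, the other out);
* `0` (zero inversions) if `x * y = 1`;
* `1` (a half-inversion) if exactly one of `x, y` is zero;
* `2` (one inversion) if `x = y = 0` (both unoriented at the live vertex `v`). -/
noncomputable def doubledInversionsLive (x y : ℤ) : ℤ :=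
  if x = 0 ∧ y = 0 then 2
  else if x = 0 ∨ y = 0 then 1
  else if x = y then 0 else 2


local notation "E3" => EuclideanSpace ℝ (Fin 3)

lemma isign_trichotomy (x : ℝ) :
    (x < 0 ∧ isign x = -1) ∨ (x = 0 ∧ isign x = 0) ∨ (0 < x ∧ isign x = 1) := by
  rcases lt_trichotomy x 0 with h | h | h
  · exact Or.inl ⟨h, by simp [isign, h]⟩
  · exact Or.inr (Or.inl ⟨h, by simp [isign, h]⟩)
  · exact Or.inr (Or.inr ⟨h, by simp [isign, h.not_gt, h.ne']⟩)

lemma doubled_split (x y : ℝ) :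
    doubledInversionsLive (isign x) (isign y) =
      (if isign x * isign y = -1 then 2 else 0) +
      (if isign x = 0 then 1 else 0) + (if isign y = 0 then 1 else 0) := by
  rcases isign_trichotomy x with ⟨_, hx⟩ | ⟨_, hx⟩ | ⟨_, hx⟩ <;>
    rcases isign_trichotomy y with ⟨_, hy⟩ | ⟨_, hy⟩ | ⟨_, hy⟩ <;>
      simp [doubledInversionsLive, hx, hy]

lemma isign_mul_neg_one {x y : ℝ} (h : isign x * isign y = -1) :
    (0 < x ∧ y < 0) ∨ (x < 0 ∧ 0 < y) := by
  rcases isign_trichotomy x with ⟨h1, hx⟩ | ⟨h1, hx⟩ | ⟨h1, hx⟩ <;>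
    rcases isign_trichotomy y with ⟨h2, hy⟩ | ⟨h2, hy⟩ | ⟨h2, hy⟩ <;>
      rw [hx, hy] at h <;> norm_num at h <;> first | exact Or.inl ⟨h1, h2⟩ | exact Or.inr ⟨h1, h2⟩

lemma isign_eq_zero {x : ℝ} (h : isign x = 0) : x = 0 := by
  rcases isign_trichotomy x with ⟨_, hx⟩ | ⟨h1, _⟩ | ⟨_, hx⟩ <;> first | exact h1 | omega

lemma mem_triangle {E : Type*} [AddCommGroup E] [Module ℝ E] (p q r : E) {A B C : ℝ}
    (hA : 0 ≤ A) (hB : 0 ≤ B) (hC : 0 ≤ C) (h : A + B + C = 1) :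
    A • p + B • q + C • r ∈ convexHull ℝ ({p, q, r} : Set E) := by
  have hp : p ∈ convexHull ℝ ({p, q, r} : Set E) := subset_convexHull ℝ _ (by simp)
  have hq : q ∈ convexHull ℝ ({p, q, r} : Set E) := subset_convexHull ℝ _ (by simp)
  have hr : r ∈ convexHull ℝ ({p, q, r} : Set E) := subset_convexHull ℝ _ (by simp)
  have hcv := convex_convexHull ℝ ({p, q, r} : Set E)
  by_cases hBC : B + C = 0
  · have hB0 : B = 0 := le_antisymm (by linarith) hB
    have hC0 : C = 0 := le_antisymm (by linarith) hC
    have hA1 : A = 1 := by linarith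
    simpa [hB0, hC0, hA1] using hp
  · have hs : 0 < B + C := lt_of_le_of_ne (by linarith) (Ne.symm hBC)
    have hz : (B / (B + C)) • q + (C / (B + C)) • r ∈ convexHull ℝ ({p, q, r} : Set E) :=
      hcv hq hr (by positivity) (by positivity) (by field_simp)
    have := hcv hp hz hA (le_of_lt hs) (by linarith)
    convert this using 1
    rw [smul_add, smul_smul, smul_smul, mul_div_cancel₀ _ hBC, mul_div_cancel₀ _ hBC, add_assoc]

lemma vectorSpan_triple (p q r : E3) :
    (affineSpan ℝ ({p, q, r} : Set E3)).direction
      = Submodule.span ℝ ({q - p, r - p} : Set E3) := by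
  rw [direction_affineSpan,
    vectorSpan_eq_span_vsub_set_right ℝ (show p ∈ ({p, q, r} : Set E3) by simp)]
  simp only [Set.image_insert_eq, Set.image_singleton, vsub_eq_sub, sub_self]
  exact Submodule.span_insert_zero

lemma core_mem_triangle {P : Set E3} {p q r : E3}
    (hT : IsExtreme ℝ P (convexHull ℝ ({p, q, r} : Set E3)))
    {z : E3} (hz : z ∈ P)
    (hzs : z - p ∈ Submodule.span ℝ ({q - p, r - p} : Set E3)) :
    z ∈ convexHull ℝ ({p, q, r} : Set E3) := by
  obtain ⟨β, γ, hβγ⟩ := Submodule.mem_span_pair.1 hzs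
  set α : ℝ := 1 - β - γ with hα
  have hzc : z = α • p + β • q + γ • r := by
    have : z = p + (β • (q - p) + γ • (r - p)) := by rw [hβγ]; abel
    rw [this, hα]; module
  set M : ℝ := |α| + |β| + |γ| + 1 with hM
  have hM1 : (0:ℝ) < 3 * M + 1 := by positivity
  set s : ℝ := 1 / (3 * M + 1) with hs
  have hs0 : 0 < s := by positivity
  have hM0 : (0:ℝ) < M := by positivity
  have hs1 : s < 1 := by rw [hs, div_lt_one hM1]; linarith
  have hsM : (1 - s) / 3 = s * M := by rw [hs]; field_simp; ring
  -- the interior point m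
  set A : ℝ := s * α + (1 - s)/3 with hA
  set B : ℝ := s * β + (1 - s)/3 with hB
  set C : ℝ := s * γ + (1 - s)/3 with hC
  have hA0 : 0 ≤ A := by
    rw [hA, hsM, ← mul_add]
    have : 0 ≤ α + M := by rw [hM]; have := abs_nonneg β; have := abs_nonneg γ;
                           have := neg_abs_le α; linarith
    positivity
  have hB0 : 0 ≤ B := by
    rw [hB, hsM, ← mul_add]
    have : 0 ≤ β + M := by rw [hM]; have := abs_nonneg α; have := abs_nonneg γ;
                           have := neg_abs_le β; linarith
    positivity
  have hC0 : 0 ≤ C := by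
    rw [hC, hsM, ← mul_add]
    have : 0 ≤ γ + M := by rw [hM]; have := abs_nonneg α; have := abs_nonneg β;
                           have := neg_abs_le γ; linarith
    positivity
  have hsum : A + B + C = 1 := by rw [hA, hB, hC]; have : α + β + γ = 1 := by rw [hα]; ring
                                  nlinarith [this]
  have hmT : A • p + B • q + C • r ∈ convexHull ℝ ({p, q, r} : Set E3) :=
    mem_triangle p q r hA0 hB0 hC0 hsum
  set c : E3 := (3⁻¹ : ℝ) • p + (3⁻¹ : ℝ) • q + (3⁻¹ : ℝ) • r with hc
  have hcT : c ∈ convexHull ℝ ({p, q, r} : Set E3) :=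
    mem_triangle p q r (by norm_num) (by norm_num) (by norm_num) (by norm_num)
  have hcP : c ∈ P := hT.1 hcT
  have hm_eq : A • p + B • q + C • r = s • z + (1 - s) • c := by
    rw [hzc, hc, hA, hB, hC]; module
  have hmseg : A • p + B • q + C • r ∈ openSegment ℝ z c :=
    ⟨s, 1 - s, hs0, by linarith, by ring, hm_eq.symm⟩
  exact (hT.2 hz hcP hmT hmseg)

lemma extreme_point_of_triangle {P : Set E3} {p q r x : E3}
    (hsub : convexHull ℝ ({p, q, r} : Set E3) ⊆ P)
    (hx : x ∈ Set.extremePoints ℝ P)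
    (hxT : x ∈ convexHull ℝ ({p, q, r} : Set E3)) : x = p ∨ x = q ∨ x = r := by
  have hxT' : x ∈ Set.extremePoints ℝ (convexHull ℝ ({p, q, r} : Set E3)) := by
    rw [mem_extremePoints]
    exact ⟨hxT, fun x1 h1 x2 h2 hseg => ⟨hx.2 (hsub h1) (hsub h2) hseg,
      hx.2 (hsub h2) (hsub h1) (by rw [openSegment_symm]; exact hseg)⟩⟩
  have := extremePoints_convexHull_subset hxT'
  simpa using this

lemma exists_support_normal
    {P : Set E3} (hPc : Convex ℝ P) {v : E3} {d : ℕ} [NeZero d] (hd : 3 ≤ d)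
    {w : ZMod d → E3}
    (hwP : ∀ j, w j ∈ P) (hwx : ∀ j, w j ∈ Set.extremePoints ℝ P)
    (hwinj : Function.Injective w) (hwne : ∀ j, w j ≠ v)
    (i : ZMod d)
    (hT : IsExtreme ℝ P (convexHull ℝ ({v, w i, w (i + 1)} : Set E3)))
    (hdim : Module.finrank ℝ
      (affineSpan ℝ (convexHull ℝ ({v, w i, w (i + 1)} : Set E3))).direction = 2) :
    ∃ ν : E3, ⟪w i - v, ν⟫ = 0 ∧ ⟪w (i + 1) - v, ν⟫ = 0 ∧
      ∀ j, j ≠ i → j ≠ i + 1 → ⟪w j - v, ν⟫ < 0 := by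
  have h1 : (1 : ZMod d) ≠ 0 := by
    intro h
    have h' : ((1 : ℕ) : ZMod d) = 0 := by exact_mod_cast h
    rw [ZMod.natCast_eq_zero_iff] at h'
    exact absurd (Nat.le_of_dvd one_pos h') (by omega)
  have h2 : (2 : ZMod d) ≠ 0 := by
    intro h
    have h' : ((2 : ℕ) : ZMod d) = 0 := by exact_mod_cast h
    rw [ZMod.natCast_eq_zero_iff] at h'
    exact absurd (Nat.le_of_dvd two_pos h') (by omega)
  have hi2i : i + 2 ≠ i := by
    intro h
    have h' : i + 2 = i + 0 := by rw [h, add_zero]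
    exact h2 (add_left_cancel h')
  have hi2i1 : i + 2 ≠ i + 1 := by
    intro h
    have h' : (2 : ZMod d) = 1 := add_left_cancel h
    have h'' : (2 : ZMod d) - 1 = 0 := by rw [h']; ring
    norm_num at h''
    exact h1 h''
  set u1 : E3 := w i - v with hu1
  set u2 : E3 := w (i + 1) - v with hu2
  set K0 : Submodule ℝ E3 := Submodule.span ℝ ({u1, u2} : Set E3) with hK0def
  have hK0rank : Module.finrank ℝ K0 = 2 := by
    rw [affineSpan_convexHull, vectorSpan_triple] at hdim
    exact hdim
  have htot : Module.finrank ℝ E3 = 3 := finrank_euclideanSpace_fin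
  have horth : Module.finrank ℝ (K0ᗮ) = 1 := by
    have := Submodule.finrank_add_finrank_orthogonal K0
    rw [hK0rank, htot] at this
    omega
  obtain ⟨ν₀, hν₀K, hν₀0⟩ : ∃ ν₀, ν₀ ∈ K0ᗮ ∧ ν₀ ≠ 0 := by
    apply Submodule.exists_mem_ne_zero_of_ne_bot
    intro h
    rw [h] at horth
    simp at horth
  have hu1K : u1 ∈ K0 := Submodule.subset_span (by simp)
  have hu2K : u2 ∈ K0 := Submodule.subset_span (by simp)
  have hinner0 : ∀ u ∈ K0, ⟪u, ν₀⟫ = 0 := (Submodule.mem_orthogonal K0 ν₀).1 hν₀K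
  have hker : ∀ y : E3, ⟪y, ν₀⟫ = 0 → y ∈ K0 := by
    have hle : K0 ≤ (ℝ ∙ ν₀)ᗮ := by
      rw [hK0def, Submodule.span_le]
      rintro x hx
      refine Submodule.mem_orthogonal_singleton_iff_inner_left.2 ?_
      exact hinner0 x (Submodule.subset_span hx)
    have hfr : Module.finrank ℝ ((ℝ ∙ ν₀)ᗮ : Submodule ℝ E3) = 2 := by
      have := Submodule.finrank_add_finrank_orthogonal (ℝ ∙ ν₀)
      rw [finrank_span_singleton hν₀0, htot] at this
      omega
    have heq : K0 = (ℝ ∙ ν₀)ᗮ :=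
      Submodule.eq_of_le_of_finrank_eq hle (by rw [hK0rank, hfr])
    intro y hy
    rw [heq]
    exact Submodule.mem_orthogonal_singleton_iff_inner_left.2 hy
  have hcore : ∀ z, z ∈ P → z - v ∈ K0 →
      z ∈ convexHull ℝ ({v, w i, w (i + 1)} : Set E3) :=
    fun z hzP hz0 => core_mem_triangle hT hzP hz0
  have hnotin : ∀ j, j ≠ i → j ≠ i + 1 →
      w j ∉ convexHull ℝ ({v, w i, w (i + 1)} : Set E3) := by
    intro j hj hj1 hmem
    rcases extreme_point_of_triangle hT.1 (hwx j) hmem with h | h | h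
    · exact hwne j h
    · exact hj (hwinj h)
    · exact hj1 (hwinj h)
  have hne0 : ∀ j, j ≠ i → j ≠ i + 1 → ⟪w j - v, ν₀⟫ ≠ 0 :=
    fun j hj hj1 h0 => hnotin j hj hj1 (hcore _ (hwP j) (hker _ h0))
  have hcross : ∀ ν : E3, (∀ y : E3, ⟪y, ν⟫ = 0 → y ∈ K0) →
      ∀ j k, j ≠ i → j ≠ i + 1 → k ≠ i → k ≠ i + 1 →
      0 < ⟪w j - v, ν⟫ → ⟪w k - v, ν⟫ < 0 → False := by
    intro ν hν j k hj hj1 hk hk1 ha hb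
    set A : ℝ := ⟪w j - v, ν⟫ with hA
    set Bv : ℝ := ⟪w k - v, ν⟫ with hBv
    have hAB : 0 < A - Bv := by linarith
    set lam : ℝ := -Bv / (A - Bv) with hlam
    have hlam0 : 0 < lam := div_pos (by linarith) hAB
    have hlam1 : lam < 1 := by rw [hlam, div_lt_one hAB]; linarith
    set z : E3 := lam • w j + (1 - lam) • w k with hz
    have hzP : z ∈ P := hPc (hwP j) (hwP k) (le_of_lt hlam0) (by linarith) (by ring)
    have hz0 : ⟪z - v, ν⟫ = 0 := by
      have hzv : z - v = lam • (w j - v) + (1 - lam) • (w k - v) := by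
        rw [hz]; module
      rw [hzv, inner_add_left, real_inner_smul_left, real_inner_smul_left, ← hA, ← hBv, hlam]
      field_simp
      ring
    have hzT := hcore z hzP (hν _ hz0)
    have hzseg : z ∈ openSegment ℝ (w j) (w k) :=
      ⟨lam, 1 - lam, hlam0, by linarith, by ring, rfl⟩
    exact hnotin j hj hj1 (hT.2 (hwP j) (hwP k) hzT hzseg)
  have hkerneg : ∀ y : E3, ⟪y, -ν₀⟫ = 0 → y ∈ K0 := by
    intro y hy
    rw [inner_neg_right, neg_eq_zero] at hy
    exact hker y hy
  by_cases hsgn : ⟪w (i + 2) - v, ν₀⟫ < 0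
  · refine ⟨ν₀, hinner0 u1 hu1K, hinner0 u2 hu2K, ?_⟩
    intro j hj hj1
    rcases (hne0 j hj hj1).lt_or_gt with h | h
    · exact h
    · exact absurd (hcross ν₀ hker j (i + 2) hj hj1 hi2i hi2i1 h hsgn) id
  · have hsgn' : ⟪w (i + 2) - v, -ν₀⟫ < 0 := by
      rw [inner_neg_right, neg_lt, neg_zero]
      exact (hne0 _ hi2i hi2i1).lt_or_gt.resolve_left hsgn
    refine ⟨-ν₀, by rw [inner_neg_right, hinner0 u1 hu1K, neg_zero],
      by rw [inner_neg_right, hinner0 u2 hu2K, neg_zero], ?_⟩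
    intro j hj hj1
    have hj0 : ⟪w j - v, -ν₀⟫ ≠ 0 := by
      rw [inner_neg_right, neg_ne_zero]
      exact hne0 j hj hj1
    rcases hj0.lt_or_gt with h | h
    · exact h
    · exact absurd (hcross (-ν₀) hkerneg j (i + 2) hj hj1 hi2i hi2i1 h hsgn') id

lemma middle_of_halfplane {n μ : E3} (hn : n ≠ 0) (y1 y2 y3 : E3)
    (h1 : ⟪y1, n⟫ = 0) (h2 : ⟪y2, n⟫ = 0) (h3 : ⟪y3, n⟫ = 0)
    (m1 : ⟪y1, μ⟫ < 0) (m2 : ⟪y2, μ⟫ < 0) (m3 : ⟪y3, μ⟫ < 0) :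
    (∃ s t : ℝ, 0 ≤ s ∧ 0 ≤ t ∧ y1 = s • y2 + t • y3) ∨
    (∃ s t : ℝ, 0 ≤ s ∧ 0 ≤ t ∧ y2 = s • y1 + t • y3) ∨
    (∃ s t : ℝ, 0 ≤ s ∧ 0 ≤ t ∧ y3 = s • y1 + t • y2) := by
  have hy1 : y1 ≠ 0 := by rintro rfl; simp at m1
  have hy2 : y2 ≠ 0 := by rintro rfl; simp at m2
  by_cases hdep : ∃ c : ℝ, c • y1 = y2
  · obtain ⟨c, hc⟩ := hdep
    have hc0 : 0 < c := by
      rcases lt_trichotomy c 0 with h | h | h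
      · exfalso
        have : ⟪y2, μ⟫ = c * ⟪y1, μ⟫ := by rw [← hc, real_inner_smul_left]
        nlinarith
      · exfalso; apply hy2; rw [← hc, h, zero_smul]
      · exact h
    exact Or.inr (Or.inl ⟨c, 0, hc0.le, le_rfl, by rw [← hc, zero_smul, add_zero]⟩)
  · -- y1, y2 independent; y3 ∈ span {y1, y2} = n ⊥
    have hind : LinearIndependent ℝ ![y1, y2] :=
      (LinearIndependent.pair_iff' hy1).2 (fun a ha => hdep ⟨a, ha⟩)
    have htot : Module.finrank ℝ E3 = 3 := finrank_euclideanSpace_fin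
    have hfr : Module.finrank ℝ ((ℝ ∙ n)ᗮ : Submodule ℝ E3) = 2 := by
      have := Submodule.finrank_add_finrank_orthogonal (ℝ ∙ n)
      rw [finrank_span_singleton hn, htot] at this
      omega
    have hspan2 : Module.finrank ℝ (Submodule.span ℝ ({y1, y2} : Set E3)) = 2 := by
      have hr : {y1, y2} = Set.range ![y1, y2] := by
        simp [Matrix.range_cons, Matrix.range_empty, Set.pair_comm]
      rw [hr, finrank_span_eq_card hind]
      simp
    have hle : Submodule.span ℝ ({y1, y2} : Set E3) ≤ (ℝ ∙ n)ᗮ := by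
      rw [Submodule.span_le]
      rintro x hx
      rcases hx with rfl | hx
      · exact Submodule.mem_orthogonal_singleton_iff_inner_left.2 h1
      · rcases hx with rfl
        exact Submodule.mem_orthogonal_singleton_iff_inner_left.2 h2
    have heq : Submodule.span ℝ ({y1, y2} : Set E3) = (ℝ ∙ n)ᗮ :=
      Submodule.eq_of_le_of_finrank_eq hle (by rw [hspan2, hfr])
    have hy3mem : y3 ∈ Submodule.span ℝ ({y1, y2} : Set E3) := by
      rw [heq]
      exact Submodule.mem_orthogonal_singleton_iff_inner_left.2 h3
    obtain ⟨a, b, hab⟩ := Submodule.mem_span_pair.1 hy3mem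
    rcases le_or_gt 0 a with ha | ha <;> rcases le_or_gt 0 b with hb | hb
    · exact Or.inr (Or.inr ⟨a, b, ha, hb, hab.symm⟩)
    · -- 0 ≤ a, b < 0 : y1 = (-b/a) y2 + (1/a) y3, need a > 0
      have ha0 : 0 < a := by
        rcases ha.lt_or_eq with h | h
        · exact h
        · exfalso
          have : ⟪y3, μ⟫ = a * ⟪y1, μ⟫ + b * ⟪y2, μ⟫ := by
            rw [← hab, inner_add_left, real_inner_smul_left, real_inner_smul_left]
          nlinarith
      refine Or.inl ⟨-b / a, 1 / a, div_nonneg (by linarith) ha0.le, (one_div_pos.2 ha0).le, ?_⟩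
      rw [← hab]
      match_scalars <;> field_simp <;> ring
    · have hb0 : 0 < b := by
        rcases hb.lt_or_eq with h | h
        · exact h
        · exfalso
          have : ⟪y3, μ⟫ = a * ⟪y1, μ⟫ + b * ⟪y2, μ⟫ := by
            rw [← hab, inner_add_left, real_inner_smul_left, real_inner_smul_left]
          nlinarith
      refine Or.inr (Or.inl ⟨-a / b, 1 / b, div_nonneg (by linarith) hb0.le, (one_div_pos.2 hb0).le, ?_⟩)
      rw [← hab]
      match_scalars <;> field_simp <;> ring
    · exfalso
      have : ⟪y3, μ⟫ = a * ⟪y1, μ⟫ + b * ⟪y2, μ⟫ := by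
        rw [← hab, inner_add_left, real_inner_smul_left, real_inner_smul_left]
      nlinarith

lemma lam_facts {x y : ℝ} (h : (0 < x ∧ y < 0) ∨ (x < 0 ∧ 0 < y)) :
    0 < y / (y - x) ∧ y / (y - x) < 1 ∧ (y / (y - x)) * x + (1 - y / (y - x)) * y = 0 := by
  have hxy : y - x ≠ 0 := by
    rcases h with ⟨hx, hy⟩ | ⟨hx, hy⟩ <;> intro h0 <;> linarith
  refine ⟨?_, ?_, by field_simp; ring⟩
  · rcases h with ⟨hx, hy⟩ | ⟨hx, hy⟩
    · exact div_pos_iff.2 (Or.inr ⟨hy, by linarith⟩)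
    · exact div_pos hy (by linarith)
  · rcases h with ⟨hx, hy⟩ | ⟨hx, hy⟩
    · have h2 : y / (y - x) - 1 = x / (y - x) := by field_simp; ring
      have h3 : x / (y - x) < 0 := div_neg_of_pos_of_neg hx (by linarith)
      linarith
    · rw [div_lt_one (by linarith)]; linarith

lemma no_middle {yb ya yc ψ μ : E3} (hb : ⟪yb, ψ⟫ = 0) (ha : ⟪ya, ψ⟫ < 0)
    (hc : ⟪yc, ψ⟫ < 0) (hμ : ⟪yb, μ⟫ < 0) {s t : ℝ} (hs : 0 ≤ s) (ht : 0 ≤ t)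
    (h : yb = s • ya + t • yc) : False := by
  rw [h, inner_add_left, real_inner_smul_left, real_inner_smul_left] at hb
  have e1 : s * ⟪ya, ψ⟫ ≤ 0 := mul_nonpos_of_nonneg_of_nonpos hs ha.le
  have e2 : t * ⟪yc, ψ⟫ ≤ 0 := mul_nonpos_of_nonneg_of_nonpos ht hc.le
  have hs0 : s * ⟪ya, ψ⟫ = 0 := by linarith
  have ht0 : t * ⟪yc, ψ⟫ = 0 := by linarith
  have hs0' : s = 0 := (mul_eq_zero.1 hs0).resolve_right (ne_of_lt ha)
  have ht0' : t = 0 := (mul_eq_zero.1 ht0).resolve_right (ne_of_lt hc)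
  rw [hs0', ht0', zero_smul, zero_smul, add_zero] at h
  rw [h, inner_zero_left] at hμ
  exact lt_irrefl 0 hμ

/-- **Lemma 2**: there are at most two inversions around every live vertex.
Here `V ⊂ ℝ³` is the vertex set of a convex polytope `P = conv V` with full affine
span, all points of `V` extreme in `P`; `w : ZMod d → V` (`d ≥ 3`) is an injective
cyclic enumeration of the neighbors of the vertex `v`, i.e. each segment `[v, w i]`
is an edge of `P` and each `conv {v, w i, w (i+1)}` is a 2-dimensional face of `P`;
`a` satisfies the same-sign condition along each edge `[v, w i]`, and `v` is live
(`a v ≠ 0`).  Then the total doubled inversion count around `v` is at most `4`. -/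
theorem at_most_two_inversions_around_live_vertex
    (V : Finset (EuclideanSpace ℝ (Fin 3)))
    (P : Set (EuclideanSpace ℝ (Fin 3)))
    (hP : P = convexHull ℝ (V : Set (EuclideanSpace ℝ (Fin 3))))
    (hspan : affineSpan ℝ (V : Set (EuclideanSpace ℝ (Fin 3))) = ⊤)
    (hvert : ∀ u ∈ V, u ∈ Set.extremePoints ℝ P)
    (v : EuclideanSpace ℝ (Fin 3)) (hv : v ∈ V)
    (d : ℕ) (hd : 3 ≤ d) [NeZero d]
    (w : ZMod d → EuclideanSpace ℝ (Fin 3))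
    (hwV : ∀ i, w i ∈ V)
    (hwinj : Function.Injective w)
    (hwne : ∀ i, w i ≠ v)
    (hedges : ∀ i, IsExtreme ℝ P (segment ℝ v (w i)))
    (htris : ∀ i : ZMod d,
      IsExtreme ℝ P (convexHull ℝ ({v, w i, w (i + 1)} : Set (EuclideanSpace ℝ (Fin 3)))) ∧
      Module.finrank ℝ
        (affineSpan ℝ
          (convexHull ℝ ({v, w i, w (i + 1)} : Set (EuclideanSpace ℝ (Fin 3))))).direction = 2)
    (a : EuclideanSpace ℝ (Fin 3) → EuclideanSpace ℝ (Fin 3))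
    (hsign : ∀ i, SameSign ⟪v - w i, a v⟫ ⟪v - w i, a (w i)⟫)
    (hlive : a v ≠ 0) :
    ∑ i : ZMod d,
        doubledInversionsLive (isign ⟪v - w i, a v⟫) (isign ⟪v - w (i + 1), a v⟫) ≤ 4 := by
  classical
  -- basic index facts
  have h1 : (1 : ZMod d) ≠ 0 := by
    intro h
    have h' : ((1 : ℕ) : ZMod d) = 0 := by exact_mod_cast h
    rw [ZMod.natCast_eq_zero_iff] at h'
    exact absurd (Nat.le_of_dvd one_pos h') (by omega)
  have h2 : (2 : ZMod d) ≠ 0 := by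
    intro h
    have h' : ((2 : ℕ) : ZMod d) = 0 := by exact_mod_cast h
    rw [ZMod.natCast_eq_zero_iff] at h'
    exact absurd (Nat.le_of_dvd two_pos h') (by omega)
  have haddne : ∀ (j : ZMod d) (c : ZMod d), c ≠ 0 → j + c ≠ j := by
    intro j c hc h
    apply hc
    have h' : j + c = j + 0 := by rw [h, add_zero]
    exact add_left_cancel h'
  have haddne' : ∀ (j : ZMod d) (c c' : ZMod d), c ≠ c' → j + c ≠ j + c' := by
    intro j c c' hc h
    exact hc (add_left_cancel h)
  have h21 : (2 : ZMod d) ≠ 1 := by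
    intro h
    apply h1
    have : (2 : ZMod d) - 1 = 0 := by rw [h]; ring
    calc (1 : ZMod d) = 2 - 1 := by ring
    _ = 0 := this
  -- geometry set-up
  set n : E3 := a v with hn
  have hn0 : n ≠ 0 := hlive
  have hPc : Convex ℝ P := hP ▸ convex_convexHull ℝ _
  have hwP : ∀ j, w j ∈ P := fun j => hP ▸ subset_convexHull ℝ _ (hwV j)
  have hwx : ∀ j, w j ∈ Set.extremePoints ℝ P := fun j => hvert _ (hwV j)
  choose ν hν1 hν2 hν3 using fun i : ZMod d =>
    exists_support_normal hPc hd hwP hwx hwinj hwne i (htris i).1 (htris i).2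
  set g : ZMod d → ℝ := fun j => ⟪v - w j, a v⟫ with hgdef
  have hgn : ∀ j, ⟪w j - v, n⟫ = -(g j) := by
    intro j
    rw [hgdef, hn]
    simp only
    rw [show v - w j = -(w j - v) by abel, inner_neg_left]
    ring
  -- the strictly separating functional μ
  set μ : E3 := ∑ i : ZMod d, ν i with hμdef
  have hμ : ∀ j, ⟪w j - v, μ⟫ < 0 := by
    intro j
    rw [hμdef, inner_sum]
    have hterm : ∀ i ∈ Finset.univ, ⟪w j - v, ν i⟫ ≤ (fun _ : ZMod d => (0:ℝ)) i := by
      intro i _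
      simp only
      by_cases hji : j = i
      · rw [hji] at *; exact le_of_eq (hν1 i)
      · by_cases hji1 : j = i + 1
        · rw [hji1] at *; exact le_of_eq (hν2 i)
        · exact (hν3 i j hji hji1).le
    have hstrict : ⟪w j - v, ν (j + 1)⟫ < 0 := by
      apply hν3 (j + 1) j
      · exact fun h => haddne j 1 h1 h.symm
      · intro h
        rw [add_assoc] at h
        exact haddne j (1 + 1) (by rw [one_add_one_eq_two]; exact h2) h.symm
    calc ∑ i : ZMod d, ⟪w j - v, ν i⟫ < ∑ _i : ZMod d, (0:ℝ) :=
          Finset.sum_lt_sum hterm ⟨j + 1, Finset.mem_univ _, hstrict⟩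
    _ = 0 := by simp
  -- sign bookkeeping
  set tf : ZMod d → ℤ := fun j => isign (g j) with htf
  set A : Finset (ZMod d) := Finset.univ.filter (fun i => tf i * tf (i + 1) = -1) with hA
  set B : Finset (ZMod d) := Finset.univ.filter (fun j => tf j = 0) with hB
  have hsum : (∑ i : ZMod d,
      doubledInversionsLive (isign ⟪v - w i, a v⟫) (isign ⟪v - w (i + 1), a v⟫)) =
      2 * (A.card : ℤ) + (B.card : ℤ) + (B.card : ℤ) := by
    have hstep : ∀ i : ZMod d,
        doubledInversionsLive (isign ⟪v - w i, a v⟫) (isign ⟪v - w (i + 1), a v⟫) =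
        (if tf i * tf (i + 1) = -1 then 2 else 0) +
        (if tf i = 0 then 1 else 0) + (if tf (i + 1) = 0 then 1 else 0) :=
      fun i => doubled_split (g i) (g (i + 1))
    rw [Finset.sum_congr rfl (fun i _ => hstep i), Finset.sum_add_distrib,
      Finset.sum_add_distrib]
    congr 1
    · congr 1
      · rw [← Finset.sum_filter, Finset.sum_const, ← hA]
        push_cast
        ring
      · rw [← Finset.sum_filter, Finset.sum_const, ← hB]
        push_cast
        ring
    · rw [Fintype.sum_equiv (Equiv.addRight (1 : ZMod d))
        (fun i => if tf (i + 1) = 0 then (1:ℤ) else 0)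
        (fun i => if tf i = 0 then (1:ℤ) else 0) (fun i => rfl)]
      rw [← Finset.sum_filter, Finset.sum_const, ← hB]
      push_cast
      ring
  rw [hsum]
  -- it suffices to bound the number of sites
  suffices hcard : A.card + B.card ≤ 2 by
    have : (A.card : ℤ) + (B.card : ℤ) ≤ 2 := by exact_mod_cast hcard
    linarith
  by_contra hcon
  push_neg at hcon
  have hdisj : Disjoint A B := by
    rw [Finset.disjoint_left]
    intro x hxA hxB
    rw [hA, Finset.mem_filter] at hxA
    rw [hB, Finset.mem_filter] at hxB
    rw [hxB.2, zero_mul] at hxA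
    exact absurd hxA.2 (by norm_num)
  have hcard3 : 2 < (A ∪ B).card := by
    rw [Finset.card_union_of_disjoint hdisj]
    omega
  obtain ⟨k1, hk1, k2, hk2, k3, hk3, h12, h13, h23⟩ := Finset.two_lt_card.1 hcard3
  -- site data
  have hAprop : ∀ k, k ∈ A → tf k ≠ 0 ∧ tf (k + 1) ≠ 0 := by
    intro k hk
    rw [hA, Finset.mem_filter] at hk
    constructor
    · intro h0; rw [h0, zero_mul] at hk; exact absurd hk.2 (by norm_num)
    · intro h0; rw [h0, mul_zero] at hk; exact absurd hk.2 (by norm_num)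
  set lam : ZMod d → ℝ := fun k => g (k + 1) / (g (k + 1) - g k) with hlamdef
  have hlamprop : ∀ k ∈ A, 0 < lam k ∧ lam k < 1 ∧
      (lam k) * g k + (1 - lam k) * g (k + 1) = 0 := by
    intro k hk
    rw [hA, Finset.mem_filter] at hk
    exact lam_facts (isign_mul_neg_one hk.2)
  set y : ZMod d → E3 := fun k =>
    if tf k = 0 then w k - v else lam k • (w k - v) + (1 - lam k) • (w (k + 1) - v) with hy
  set ψ : ZMod d → E3 := fun k => if tf k = 0 then ν (k - 1) + ν k else ν k with hψ
  -- inner products with ψ k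
  have hψle : ∀ k ∈ A ∪ B, ∀ j : ZMod d, ⟪w j - v, ψ k⟫ ≤ 0 := by
    intro k hk j
    rw [hψ]
    simp only
    split
    · rw [inner_add_right]
      have e1 : ⟪w j - v, ν (k - 1)⟫ ≤ 0 := by
        by_cases hj : j = k - 1
        · rw [hj]; exact le_of_eq (hν1 (k - 1))
        · by_cases hj' : j = (k - 1) + 1
          · rw [hj']; exact le_of_eq (hν2 (k - 1))
          · exact (hν3 (k - 1) j hj hj').le
      have e2 : ⟪w j - v, ν k⟫ ≤ 0 := by
        by_cases hj : j = k
        · rw [hj]; exact le_of_eq (hν1 k)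
        · by_cases hj' : j = k + 1
          · rw [hj']; exact le_of_eq (hν2 k)
          · exact (hν3 k j hj hj').le
      linarith
    · by_cases hj : j = k
      · rw [hj]; exact le_of_eq (hν1 k)
      · by_cases hj' : j = k + 1
        · rw [hj']; exact le_of_eq (hν2 k)
        · exact (hν3 k j hj hj').le
  have hψlt : ∀ k ∈ A ∪ B, ∀ j : ZMod d, j ≠ k → (k ∈ A → j ≠ k + 1) →
      ⟪w j - v, ψ k⟫ < 0 := by
    intro k hk j hjk hjk1
    rw [hψ]
    simp only
    split
    case isTrue htk =>
      -- k ∈ B : ψ k = ν (k-1) + ν k, strictly negative off j = k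
      rw [inner_add_right]
      have hkk : (k - 1) + 1 = k := by ring
      have e1 : ⟪w j - v, ν (k - 1)⟫ ≤ 0 := by
        by_cases hj : j = k - 1
        · rw [hj]; exact le_of_eq (hν1 (k - 1))
        · by_cases hj' : j = (k - 1) + 1
          · rw [hj']; exact le_of_eq (hν2 (k - 1))
          · exact (hν3 (k - 1) j hj hj').le
      have e2 : ⟪w j - v, ν k⟫ ≤ 0 := by
        by_cases hj : j = k
        · exact absurd hj hjk
        · by_cases hj' : j = k + 1
          · rw [hj']; exact le_of_eq (hν2 k)
          · exact (hν3 k j hj hj').le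
      have estrict : ⟪w j - v, ν (k - 1)⟫ < 0 ∨ ⟪w j - v, ν k⟫ < 0 := by
        by_cases hj : j = k - 1
        · right
          apply hν3 k j hjk
          intro hj'
          rw [hj] at hj'
          -- hj' : k - 1 = k + 1 → 2 = 0
          have hcl : k + 1 + 1 = k - 1 + 1 := by rw [hj']
          rw [hkk] at hcl
          apply h2
          have hfin : k + 2 = k + 0 := by
            calc k + 2 = k + 1 + 1 := by ring
            _ = k := hcl
            _ = k + 0 := (add_zero k).symm
          exact add_left_cancel hfin
        · left
          apply hν3 (k - 1) j hj
          rw [hkk]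
          exact hjk
      rcases estrict with h | h <;> linarith
    case isFalse htk =>
      have hkA : k ∈ A := by
        rcases Finset.mem_union.1 hk with h | h
        · exact h
        · rw [hB, Finset.mem_filter] at h
          exact absurd h.2 htk
      exact hν3 k j hjk (hjk1 hkA)
  -- main site facts
  have hyfacts : ∀ k ∈ A ∪ B, ⟪y k, n⟫ = 0 ∧ ⟪y k, μ⟫ < 0 ∧ ⟪y k, ψ k⟫ = 0 := by
    intro k hk
    rw [hy]
    simp only
    split
    case isTrue htk =>
      have hg0 : g k = 0 := isign_eq_zero htk
      refine ⟨by rw [hgn, hg0, neg_zero], hμ k, ?_⟩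
      rw [hψ]
      simp only [if_pos htk]
      rw [inner_add_right]
      have hkk : (k - 1) + 1 = k := by ring
      have e1 : ⟪w k - v, ν (k - 1)⟫ = 0 := by
        have := hν2 (k - 1)
        rw [hkk] at this
        exact this
      rw [e1, hν1 k, add_zero]
    case isFalse htk =>
      have hkA : k ∈ A := by
        rcases Finset.mem_union.1 hk with h | h
        · exact h
        · rw [hB, Finset.mem_filter] at h
          exact absurd h.2 htk
      obtain ⟨hl0, hl1, hsum0⟩ := hlamprop k hkA
      constructor
      · rw [inner_add_left, real_inner_smul_left, real_inner_smul_left, hgn, hgn]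
        have : lam k * -g k + (1 - lam k) * -g (k + 1)
            = -((lam k) * g k + (1 - lam k) * g (k + 1)) := by ring
        rw [this, hsum0, neg_zero]
      constructor
      · rw [inner_add_left, real_inner_smul_left, real_inner_smul_left]
        have t1 := hμ k
        have t2 := hμ (k + 1)
        nlinarith
      · rw [hψ]
        simp only [if_neg htk]
        rw [inner_add_left, real_inner_smul_left, real_inner_smul_left, hν1 k, hν2 k]
        ring
  have hylt : ∀ k ∈ A ∪ B, ∀ l ∈ A ∪ B, l ≠ k → ⟪y l, ψ k⟫ < 0 := by
    intro k hk l hl hlk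
    rw [hy]
    simp only
    split
    case isTrue htl =>
      -- l ∈ B
      apply hψlt k hk l hlk
      intro hkA hlk1
      -- l = k + 1 and k ∈ A : then tf (k+1) ≠ 0, contradiction with tf l = 0
      exact (hAprop k hkA).2 (by rw [← hlk1]; exact htl)
    case isFalse htl =>
      have hlA : l ∈ A := by
        rcases Finset.mem_union.1 hl with h | h
        · exact h
        · rw [hB, Finset.mem_filter] at h
          exact absurd h.2 htl
      obtain ⟨hl0, hl1, -⟩ := hlamprop l hlA
      rw [inner_add_left, real_inner_smul_left, real_inner_smul_left]
      have e1 : ⟪w l - v, ψ k⟫ ≤ 0 := hψle k hk l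
      have e2 : ⟪w (l + 1) - v, ψ k⟫ ≤ 0 := hψle k hk (l + 1)
      have estrict : ⟪w l - v, ψ k⟫ < 0 ∨ ⟪w (l + 1) - v, ψ k⟫ < 0 := by
        by_cases hcase : l + 1 = k
        · left
          apply hψlt k hk l hlk
          intro hkA
          intro hlk1
          -- l = k + 1 and l + 1 = k : then k + 2 = k
          apply h2
          have : k + 2 = k + 0 := by
            rw [add_zero]
            calc k + 2 = (k + 1) + 1 := by ring
            _ = l + 1 := by rw [hlk1]
            _ = k := hcase
          exact add_left_cancel this
        · right
          apply hψlt k hk (l + 1) hcase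
          intro hkA hlk1
          -- l + 1 = k + 1 → l = k, contradiction
          exact hlk (add_right_cancel hlk1)
      rcases estrict with h | h
      · nlinarith
      · nlinarith
  -- contradiction via the middle-vector lemma
  have f1 := hyfacts k1 hk1
  have f2 := hyfacts k2 hk2
  have f3 := hyfacts k3 hk3
  rcases middle_of_halfplane hn0 (y k1) (y k2) (y k3) f1.1 f2.1 f3.1 f1.2.1 f2.2.1 f3.2.1 with
    ⟨s, t, hs, ht, heq⟩ | ⟨s, t, hs, ht, heq⟩ | ⟨s, t, hs, ht, heq⟩
  · exact no_middle f1.2.2 (hylt k1 hk1 k2 hk2 (Ne.symm h12)) (hylt k1 hk1 k3 hk3 (Ne.symm h13))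
      f1.2.1 hs ht heq
  · exact no_middle f2.2.2 (hylt k2 hk2 k1 hk1 h12) (hylt k2 hk2 k3 hk3 (Ne.symm h23))
      f2.2.1 hs ht heq
  · exact no_middle f3.2.2 (hylt k3 hk3 k1 hk1 h13) (hylt k3 hk3 k2 hk2 h23)
      f3.2.1 hs ht heq
end
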